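/- A linear subspace of R^n is a vector sublattice if and only if it is the linear span of a set of pairwise disjoint nonnegative vectors. -/

import Mathlib

open Finset

namespace Stmt9Aux

variable {n : ℕ}

/-- The support of a vector, as a finset. -/
noncomputable def suppF (x : Fin n → ℝ) : Finset (Fin n) := Finset.univ.filter fun i => x i ≠ 0

lemma mem_suppF {x : Fin n → ℝ} {i : Fin n} : i ∈ suppF x ↔ x i ≠ 0 := by
  simp [suppF]

lemma eq_zero_of_suppF_empty {x : Fin n → ℝ} (h : suppF x = ∅) : x = 0 := by
  funext i
  by_contra hi
  exact absurd (mem_suppF.mpr hi) (by simp [h])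

lemma suppF_nonempty {x : Fin n → ℝ} (h : x ≠ 0) : (suppF x).Nonempty := by
  rcases Finset.eq_empty_or_nonempty (suppF x) with he | hne
  · exact absurd (eq_zero_of_suppF_empty he) h
  · exact hne

lemma suppF_smul {c : ℝ} (hc : c ≠ 0) (x : Fin n → ℝ) : suppF (c • x) = suppF x := by
  ext i
  simp [mem_suppF, hc]

section Backward

/-- Key pointwise computation for the backward direction. -/
lemma key_sum (s : Set (Fin n → ℝ)) (hs0 : ∀ v ∈ s, 0 ≤ v)
    (hsd : s.Pairwise fun v w => v ⊓ w = 0)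
    (T : Finset (Fin n → ℝ)) (hT : ↑T ⊆ s) (c d : (Fin n → ℝ) → ℝ) :
    ((∑ v ∈ T, c v • v) ⊔ (∑ v ∈ T, d v • v)) = ∑ v ∈ T, (max (c v) (d v)) • v := by
  funext i
  simp only [Pi.sup_apply, Finset.sum_apply, Pi.smul_apply, smul_eq_mul]
  by_cases h : ∃ v₀ ∈ T, v₀ i ≠ 0
  · obtain ⟨v₀, hv₀T, hv₀i⟩ := h
    have hpos : 0 < v₀ i := lt_of_le_of_ne (hs0 v₀ (hT hv₀T) i) (Ne.symm hv₀i)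
    have hz : ∀ v ∈ T, v ≠ v₀ → v i = 0 := by
      intro v hv hne
      have hd := hsd (hT hv) (hT hv₀T) hne
      have h2 : min (v i) (v₀ i) = 0 := by
        have := congrFun hd i
        simpa [Pi.inf_apply] using this
      by_contra hvi
      have : 0 < v i := lt_of_le_of_ne (hs0 v (hT hv) i) (Ne.symm hvi)
      have := lt_min this hpos
      rw [h2] at this
      exact lt_irrefl 0 this
    have e1 : ∑ v ∈ T, c v * v i = c v₀ * v₀ i :=
      Finset.sum_eq_single_of_mem v₀ hv₀T (fun v hv hne => by rw [hz v hv hne, mul_zero])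
    have e2 : ∑ v ∈ T, d v * v i = d v₀ * v₀ i :=
      Finset.sum_eq_single_of_mem v₀ hv₀T (fun v hv hne => by rw [hz v hv hne, mul_zero])
    have e3 : ∑ v ∈ T, max (c v) (d v) * v i = max (c v₀) (d v₀) * v₀ i :=
      Finset.sum_eq_single_of_mem v₀ hv₀T (fun v hv hne => by rw [hz v hv hne, mul_zero])
    rw [e1, e2, e3, max_mul_of_nonneg _ _ hpos.le]
  · push_neg at h
    have e1 : ∑ v ∈ T, c v * v i = 0 := Finset.sum_eq_zero fun v hv => by rw [h v hv, mul_zero]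
    have e2 : ∑ v ∈ T, d v * v i = 0 := Finset.sum_eq_zero fun v hv => by rw [h v hv, mul_zero]
    have e3 : ∑ v ∈ T, max (c v) (d v) * v i = 0 :=
      Finset.sum_eq_zero fun v hv => by rw [h v hv, mul_zero]
    rw [e1, e2, e3]
    simp

lemma sup_mem_span (s : Set (Fin n → ℝ)) (hs0 : ∀ v ∈ s, 0 ≤ v)
    (hsd : s.Pairwise fun v w => v ⊓ w = 0) {x y : Fin n → ℝ}
    (hx : x ∈ Submodule.span ℝ s) (hy : y ∈ Submodule.span ℝ s) :
    x ⊔ y ∈ Submodule.span ℝ s := by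
  obtain ⟨c, hc, hcx⟩ := Submodule.mem_span_set.mp hx
  obtain ⟨d, hd, hdy⟩ := Submodule.mem_span_set.mp hy
  set T : Finset (Fin n → ℝ) := c.support ∪ d.support with hTdef
  have hT : ↑T ⊆ s := by
    rw [hTdef]
    push_cast
    exact Set.union_subset hc hd
  have hx' : x = ∑ v ∈ T, c v • v := by
    rw [← hcx, Finsupp.sum]
    exact Finset.sum_subset Finset.subset_union_left
      (fun v _ hv => by rw [Finsupp.notMem_support_iff.mp hv, zero_smul])
  have hy' : y = ∑ v ∈ T, d v • v := by
    rw [← hdy, Finsupp.sum]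
    exact Finset.sum_subset Finset.subset_union_right
      (fun v _ hv => by rw [Finsupp.notMem_support_iff.mp hv, zero_smul])
  rw [hx', hy', key_sum s hs0 hsd T hT c d]
  exact Submodule.sum_mem _ fun v hv =>
    Submodule.smul_mem _ _ (Submodule.subset_span (hT hv))

end Backward

section Forward

variable {Y : Submodule ℝ (Fin n → ℝ)}

lemma inf_mem (hY : ∀ x ∈ Y, ∀ y ∈ Y, x ⊔ y ∈ Y) {x y : Fin n → ℝ}
    (hx : x ∈ Y) (hy : y ∈ Y) : x ⊓ y ∈ Y := by
  have h : x ⊓ y = x + y - x ⊔ y := by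
    funext i
    simp only [Pi.inf_apply, Pi.sup_apply, Pi.add_apply, Pi.sub_apply]
    have := min_add_max (x i) (y i)
    linarith
  rw [h]
  exact Submodule.sub_mem _ (Submodule.add_mem _ hx hy) (hY x hx y hy)

lemma posPart_mem (hY : ∀ x ∈ Y, ∀ y ∈ Y, x ⊔ y ∈ Y) {x : Fin n → ℝ}
    (hx : x ∈ Y) : x ⊔ 0 ∈ Y :=
  hY x hx 0 (Submodule.zero_mem Y)

lemma posPart_sub_negPart (x : Fin n → ℝ) : x = (x ⊔ 0) - ((-x) ⊔ 0) := by
  funext i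
  simp only [Pi.sub_apply, Pi.sup_apply, Pi.zero_apply, Pi.neg_apply]
  rcases le_total (x i) 0 with h | h
  · rw [max_eq_right h, max_eq_left (by linarith)]
    ring
  · rw [max_eq_left h, max_eq_right (by linarith)]
    ring

/-- A "strong atom" of `Y`. -/
def IsSAtom (Y : Submodule ℝ (Fin n → ℝ)) (a : Fin n → ℝ) : Prop :=
  a ∈ Y ∧ 0 ≤ a ∧ a ≠ 0 ∧
    ∀ y ∈ Y, 0 ≤ y → suppF y ⊆ suppF a → ∃ t : ℝ, y = t • a

lemma exists_atom (hY : ∀ x ∈ Y, ∀ y ∈ Y, x ⊔ y ∈ Y) {x : Fin n → ℝ}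
    (hx : x ∈ Y) (hx0 : 0 ≤ x) (hxne : x ≠ 0) :
    ∃ a, IsSAtom Y a ∧ suppF a ⊆ suppF x := by
  set P : Set (Fin n → ℝ) := {y | y ∈ Y ∧ 0 ≤ y ∧ y ≠ 0 ∧ suppF y ⊆ suppF x} with hP
  have hxP : x ∈ P := ⟨hx, hx0, hxne, subset_rfl⟩
  -- pick a minimizer of support cardinality
  have hne : ((fun y => (suppF y).card) '' P).Nonempty := ⟨_, x, hxP, rfl⟩
  obtain ⟨a, haP, hacard⟩ := Nat.sInf_mem hne
  have hamin : ∀ b ∈ P, (suppF a).card ≤ (suppF b).card := by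
    intro b hb
    exact hacard.trans_le (Nat.sInf_le ⟨b, hb, rfl⟩)
  obtain ⟨haY, ha0, hane, hasub⟩ := haP
  refine ⟨a, ⟨haY, ha0, hane, ?_⟩, hasub⟩
  intro y hyY hy0 hysub
  by_cases hyne : y = 0
  · exact ⟨0, by rw [hyne, zero_smul]⟩
  obtain ⟨i₀, hi₀, hmin⟩ := Finset.exists_min_image (suppF a) (fun i => y i / a i)
    (suppF_nonempty hane)
  have hai₀ : 0 < a i₀ := lt_of_le_of_ne (ha0 i₀) (Ne.symm (mem_suppF.mp hi₀))
  set t := y i₀ / a i₀ with ht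
  set z := y - t • a with hzdef
  by_cases hz : z = 0
  · refine ⟨t, ?_⟩
    have := congrArg (· + t • a) hz
    simpa [hzdef, sub_add_cancel] using this
  · exfalso
    have hzY : z ∈ Y := Submodule.sub_mem _ hyY (Submodule.smul_mem _ _ haY)
    have hzsupp : suppF z ⊆ (suppF a).erase i₀ := by
      intro i hi
      have hzi : z i ≠ 0 := mem_suppF.mp hi
      rw [Finset.mem_erase]
      constructor
      · rintro rfl
        apply hzi
        simp only [hzdef, Pi.sub_apply, Pi.smul_apply, smul_eq_mul, ht]
        field_simp
        ring
      · by_contra hia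
        apply hzi
        have hai : a i = 0 := by
          by_contra h'
          exact hia (mem_suppF.mpr h')
        have hyi : y i = 0 := by
          by_contra h'
          exact hia (hysub (mem_suppF.mpr h'))
        simp [hzdef, hai, hyi]
    -- one of the parts of z is a nonzero nonnegative element with small support
    have hdecomp := posPart_sub_negPart z
    have hwex : ∃ w : Fin n → ℝ, w ∈ Y ∧ 0 ≤ w ∧ w ≠ 0 ∧ suppF w ⊆ suppF z := by
      by_cases hp : z ⊔ 0 = 0
      · refine ⟨(-z) ⊔ 0, posPart_mem hY (Submodule.neg_mem _ hzY), le_sup_right, ?_, ?_⟩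
        · intro h
          apply hz
          rw [hdecomp, hp, h, sub_zero]
        · intro i hi
          rw [mem_suppF] at hi ⊢
          intro h
          apply hi
          simp [h]
      · refine ⟨z ⊔ 0, posPart_mem hY hzY, le_sup_right, hp, ?_⟩
        intro i hi
        rw [mem_suppF] at hi ⊢
        intro h
        apply hi
        simp [h]
    obtain ⟨w, hwY, hw0, hwne, hwsub⟩ := hwex
    have hwP : w ∈ P := ⟨hwY, hw0, hwne, fun i hi => hasub (Finset.erase_subset _ _ (hzsupp (hwsub hi)))⟩
    have := hamin w hwP
    have hlt : ((suppF a).erase i₀).card < (suppF a).card := Finset.card_erase_lt_of_mem hi₀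
    have hle : (suppF w).card ≤ ((suppF a).erase i₀).card :=
      Finset.card_le_card (fun i hi => hzsupp (hwsub hi))
    omega

/-- Normalized strong atoms. -/
def S (Y : Submodule ℝ (Fin n → ℝ)) : Set (Fin n → ℝ) :=
  {a | IsSAtom Y a ∧ ∑ i, a i = 1}

lemma atom_mem_span {a : Fin n → ℝ} (ha : IsSAtom Y a) :
    a ∈ Submodule.span ℝ (S Y) := by
  obtain ⟨haY, ha0, hane, hprop⟩ := ha
  set c := ∑ i, a i with hc
  have hcpos : 0 < c := by
    obtain ⟨i, hi⟩ := suppF_nonempty hane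
    exact Finset.sum_pos' (fun j _ => ha0 j)
      ⟨i, Finset.mem_univ i, lt_of_le_of_ne (ha0 i) (Ne.symm (mem_suppF.mp hi))⟩
  have hcne : c ≠ 0 := ne_of_gt hcpos
  have hmem : c⁻¹ • a ∈ S Y := by
    refine ⟨⟨Submodule.smul_mem _ _ haY, smul_nonneg (inv_nonneg.mpr hcpos.le) ha0,
      smul_ne_zero (inv_ne_zero hcne) hane, ?_⟩, ?_⟩
    · intro y hyY hy0 hysub
      rw [suppF_smul (inv_ne_zero hcne)] at hysub
      obtain ⟨t, ht⟩ := hprop y hyY hy0 hysub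
      refine ⟨t * c, ?_⟩
      rw [ht, smul_smul, mul_assoc, mul_inv_cancel₀ hcne, mul_one]
    · simp only [Pi.smul_apply, smul_eq_mul, ← Finset.mul_sum, ← hc]
      exact inv_mul_cancel₀ hcne
  have : a = c • (c⁻¹ • a) := by
    rw [smul_smul, mul_inv_cancel₀ hcne, one_smul]
  rw [this]
  exact Submodule.smul_mem _ _ (Submodule.subset_span hmem)

lemma span_aux (hY : ∀ x ∈ Y, ∀ y ∈ Y, x ⊔ y ∈ Y) :
    ∀ k, ∀ x ∈ Y, 0 ≤ x → (suppF x).card ≤ k → x ∈ Submodule.span ℝ (S Y) := by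
  intro k
  induction k with
  | zero =>
    intro x _ _ hcard
    rw [eq_zero_of_suppF_empty (Finset.card_eq_zero.mp (Nat.le_zero.mp hcard))]
    exact Submodule.zero_mem _
  | succ k ih =>
    intro x hx hx0 hcard
    by_cases hxne : x = 0
    · rw [hxne]; exact Submodule.zero_mem _
    obtain ⟨a, ha, hsub⟩ := exists_atom hY hx hx0 hxne
    obtain ⟨haY, ha0, hane, _⟩ := id ha
    obtain ⟨i₀, hi₀, hmin⟩ := Finset.exists_min_image (suppF a) (fun i => x i / a i)
      (suppF_nonempty hane)
    have hai₀ : 0 < a i₀ := lt_of_le_of_ne (ha0 i₀) (Ne.symm (mem_suppF.mp hi₀))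
    set t := x i₀ / a i₀ with ht
    set z := x - t • a with hzdef
    have hzY : z ∈ Y := Submodule.sub_mem _ hx (Submodule.smul_mem _ _ haY)
    have hz0 : 0 ≤ z := by
      intro i
      by_cases hi : i ∈ suppF a
      · have hai : 0 < a i := lt_of_le_of_ne (ha0 i) (Ne.symm (mem_suppF.mp hi))
        have h1 : t ≤ x i / a i := hmin i hi
        rw [le_div_iff₀ hai] at h1
        simp only [hzdef, Pi.sub_apply, Pi.smul_apply, smul_eq_mul, Pi.zero_apply]
        linarith
      · have hai : a i = 0 := by
          by_contra h'
          exact hi (mem_suppF.mpr h')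
        simp only [hzdef, Pi.sub_apply, Pi.smul_apply, smul_eq_mul, hai, mul_zero, sub_zero]
        exact hx0 i
    have hzsupp : suppF z ⊆ (suppF x).erase i₀ := by
      intro i hi
      have hzi : z i ≠ 0 := mem_suppF.mp hi
      rw [Finset.mem_erase]
      constructor
      · rintro rfl
        apply hzi
        simp only [hzdef, Pi.sub_apply, Pi.smul_apply, smul_eq_mul, ht]
        field_simp
        ring
      · by_contra hix
        apply hzi
        have hxi : x i = 0 := by
          by_contra h'
          exact hix (mem_suppF.mpr h')
        have hai : a i = 0 := by
          by_contra h'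
          exact hix (hsub (mem_suppF.mpr h'))
        simp [hzdef, hai, hxi]
    have hcard' : (suppF z).card ≤ k := by
      have h1 : ((suppF x).erase i₀).card < (suppF x).card :=
        Finset.card_erase_lt_of_mem (hsub hi₀)
      have h2 : (suppF z).card ≤ ((suppF x).erase i₀).card := Finset.card_le_card hzsupp
      omega
    have hzspan := ih z hzY hz0 hcard'
    have hx_eq : x = z + t • a := by rw [hzdef, sub_add_cancel]
    rw [hx_eq]
    exact Submodule.add_mem _ hzspan (Submodule.smul_mem _ _ (atom_mem_span ha))

end Forward

end Stmt9Aux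

open Stmt9Aux in
/-- A subspace of `ℝⁿ` is a sublattice iff it is the span of pairwise disjoint
nonnegative vectors. -/
theorem stmt9 {n : ℕ} (Y : Submodule ℝ (Fin n → ℝ)) :
    (∀ x ∈ Y, ∀ y ∈ Y, x ⊔ y ∈ Y) ↔
      ∃ s : Set (Fin n → ℝ), (∀ v ∈ s, 0 ≤ v) ∧
        (s.Pairwise fun v w => v ⊓ w = 0) ∧ Y = Submodule.span ℝ s := by
  constructor
  · intro hY
    refine ⟨S Y, fun v hv => hv.1.2.1, ?_, ?_⟩
    · intro a ha b hb hab
      by_contra hg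
      set g := a ⊓ b with hgdef
      have hgY : g ∈ Y := inf_mem hY ha.1.1 hb.1.1
      have hg0 : 0 ≤ g := le_inf ha.1.2.1 hb.1.2.1
      have hga : suppF g ⊆ suppF a := by
        intro i hi
        rw [mem_suppF] at hi ⊢
        intro h
        apply hi
        have h1 : g i ≤ a i := by
          simp only [hgdef, Pi.inf_apply]
          exact inf_le_left
        have := hg0 i
        simp only [Pi.zero_apply] at this
        linarith
      have hgb : suppF g ⊆ suppF b := by
        intro i hi
        rw [mem_suppF] at hi ⊢
        intro h
        apply hi
        have h1 : g i ≤ b i := by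
          simp only [hgdef, Pi.inf_apply]
          exact inf_le_right
        have := hg0 i
        simp only [Pi.zero_apply] at this
        linarith
      obtain ⟨t, htg⟩ := ha.1.2.2.2 g hgY hg0 hga
      obtain ⟨u, hug⟩ := hb.1.2.2.2 g hgY hg0 hgb
      have hsum_t : ∑ i, g i = t := by
        rw [htg]
        simp only [Pi.smul_apply, smul_eq_mul, ← Finset.mul_sum, ha.2, mul_one]
      have hsum_u : ∑ i, g i = u := by
        rw [hug]
        simp only [Pi.smul_apply, smul_eq_mul, ← Finset.mul_sum, hb.2, mul_one]
      have htu : t = u := hsum_t ▸ hsum_u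
      have htne : t ≠ 0 := by
        rintro rfl
        rw [zero_smul] at htg
        exact hg htg
      apply hab
      exact smul_right_injective (Fin n → ℝ) htne (show t • a = t • b by rw [← htg, hug, htu])
    · apply le_antisymm
      · intro x hx
        have h1 : x ⊔ 0 ∈ Submodule.span ℝ (S Y) :=
          span_aux hY n (x ⊔ 0) (posPart_mem hY hx) le_sup_right
            (le_trans (Finset.card_le_univ _) (by simp))
        have h2 : (-x) ⊔ 0 ∈ Submodule.span ℝ (S Y) :=
          span_aux hY n ((-x) ⊔ 0) (posPart_mem hY (Submodule.neg_mem _ hx)) le_sup_right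
            (le_trans (Finset.card_le_univ _) (by simp))
        rw [Stmt9Aux.posPart_sub_negPart x]
        exact Submodule.sub_mem _ h1 h2
      · rw [Submodule.span_le]
        intro a ha
        exact ha.1.1
  · rintro ⟨s, hs0, hsd, rfl⟩ x hx y hy
    exact sup_mem_span s hs0 hsd hx hy
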